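/- Assume that the matrix M̂_0 = N − |A| is a nonsingular M-matrix. Then every admissible solution (x, u) of the controlled Lotka-Volterra system with infinite delay is bounded on [0, ∞), i.e. there is a constant B such that |x_i(t)| ≤ B and |u_i(t)| ≤ B for all t ≥ 0 and i = 1,…,n. -/

import Mathlib

open MeasureTheory Filter Topology

noncomputable section

/-- All principal minors of a square real matrix are positive. -/
def PrincipalMinorsPos {n : ℕ} (M : Matrix (Fin n) (Fin n) ℝ) : Prop :=
  ∀ s : Finset (Fin n),
    0 < (M.submatrix (fun i : {i // i ∈ s} => i.1) (fun i : {i // i ∈ s} => i.1)).det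

/-- All principal minors of a square real matrix are nonnegative. -/
def PrincipalMinorsNonneg {n : ℕ} (M : Matrix (Fin n) (Fin n) ℝ) : Prop :=
  ∀ s : Finset (Fin n),
    0 ≤ (M.submatrix (fun i : {i // i ∈ s} => i.1) (fun i : {i // i ∈ s} => i.1)).det

/-- A P-matrix: all principal minors are positive. -/
def IsPMatrix {n : ℕ} (M : Matrix (Fin n) (Fin n) ℝ) : Prop := PrincipalMinorsPos M

/-- A nonsingular M-matrix: nonpositive off-diagonal entries and all principal
minors positive. -/
def IsNonsingularMMatrix {n : ℕ} (M : Matrix (Fin n) (Fin n) ℝ) : Prop :=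
  (∀ i j, i ≠ j → M i j ≤ 0) ∧ PrincipalMinorsPos M

/-- An M-matrix: nonpositive off-diagonal entries and all principal minors
nonnegative. -/
def IsMMatrix {n : ℕ} (M : Matrix (Fin n) (Fin n) ℝ) : Prop :=
  (∀ i j, i ≠ j → M i j ≤ 0) ∧ PrincipalMinorsNonneg M

/-- A saturated equilibrium of the controlled Lotka-Volterra system with community
matrix `M`: `xs ≥ 0`, `us i = (d i / e i) * xs i`, and for each `i` either `xs i > 0`
and `(M xs)_i = b i`, or `xs i = 0` and `(M xs)_i ≥ b i`. -/
def SaturatedEquilibrium {n : ℕ} (M : Matrix (Fin n) (Fin n) ℝ) (b d e : Fin n → ℝ)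
    (xs us : Fin n → ℝ) : Prop :=
  (∀ i, 0 ≤ xs i) ∧ (∀ i, us i = d i / e i * xs i) ∧
  ∀ i, (0 < xs i ∧ M.mulVec xs i = b i) ∨ (xs i = 0 ∧ b i ≤ M.mulVec xs i)

/-- A normalized kernel: nonnegative on `[0,∞)`, integrable on `(0,∞)`, with
integral one. -/
def KernelOK (f : ℝ → ℝ) : Prop :=
  (∀ s, 0 ≤ s → 0 ≤ f s) ∧ MeasureTheory.IntegrableOn f (Set.Ioi 0) ∧
  ∫ s in Set.Ioi (0:ℝ), f s = 1

/-- Effectiveness of a control kernel `g`: `∫_0^∞ g(s) φ(-s) ds > 0` for every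
bounded continuous nonnegative `φ` on `(-∞,0]` with `φ(0) > 0`. -/
def ControlKernelPos (g : ℝ → ℝ) : Prop :=
  ∀ φ : ℝ → ℝ, Continuous φ → (∀ t ≤ (0:ℝ), 0 ≤ φ t) → (∃ B, ∀ t ≤ (0:ℝ), φ t ≤ B) →
    0 < φ 0 → 0 < ∫ s in Set.Ioi (0:ℝ), g s * φ (-s)

/-- An admissible solution of the controlled Lotka-Volterra system with infinite
delay: continuous, componentwise nonnegative, bounded on `(-∞,0]`, positive at `0`,
differentiable on `(0,∞)` and satisfying the system there. -/
def AdmissibleSolution {n : ℕ} (b μ c d e : Fin n → ℝ) (a : Matrix (Fin n) (Fin n) ℝ)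
    (K : Fin n → Fin n → ℝ → ℝ) (G : Fin n → ℝ → ℝ) (x u : ℝ → Fin n → ℝ) : Prop :=
  (∀ i, Continuous fun t => x t i) ∧ (∀ i, Continuous fun t => u t i) ∧
  (∀ t i, 0 ≤ x t i) ∧ (∀ t i, 0 ≤ u t i) ∧
  (∃ B : ℝ, ∀ t ≤ (0:ℝ), ∀ i, x t i ≤ B ∧ u t i ≤ B) ∧
  (∀ i, 0 < x 0 i) ∧ (∀ i, 0 < u 0 i) ∧
  (∀ i, ∀ t, 0 < t → HasDerivAt (fun τ => x τ i)
      (x t i * (b i - μ i * x t i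
        - (∑ j, a i j * ∫ s in Set.Ioi (0:ℝ), K i j s * x (t - s) j)
        - c i * ∫ s in Set.Ioi (0:ℝ), G i s * u (t - s) i)) t) ∧
  (∀ i, ∀ t, 0 < t → HasDerivAt (fun τ => u τ i) (-(e i) * u t i + d i * x t i) t)


lemma exists_pos_forall_lt {ι : Type*} [Fintype ι] (f : ι → ℝ) :
    ∃ V : ℝ, 0 < V ∧ ∀ i, f i < V := by
  rcases isEmpty_or_nonempty ι with h | h
  · exact ⟨1, one_pos, fun i => isEmptyElim i⟩
  · refine ⟨max 1 (Finset.univ.sup' Finset.univ_nonempty f) + 1, ?_, fun i => ?_⟩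
    · have := le_max_left 1 (Finset.univ.sup' Finset.univ_nonempty f); linarith
    · have h1 : f i ≤ Finset.univ.sup' Finset.univ_nonempty f :=
        Finset.le_sup' f (Finset.mem_univ i)
      have := le_max_right 1 (Finset.univ.sup' Finset.univ_nonempty f); linarith

lemma exists_pos_forall_le {ι : Type*} [Fintype ι] (f : ι → ℝ) (hf : ∀ i, 0 < f i) :
    ∃ δ : ℝ, 0 < δ ∧ ∀ i, δ ≤ f i := by
  rcases isEmpty_or_nonempty ι with h | h
  · exact ⟨1, one_pos, fun i => isEmptyElim i⟩
  · refine ⟨Finset.univ.inf' Finset.univ_nonempty f, ?_,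
      fun i => Finset.inf'_le f (Finset.mem_univ i)⟩
    exact (Finset.lt_inf'_iff _).mpr fun i _ => hf i


/-- Schur complement of the (0,0) entry. -/
def schur00 {m : ℕ} (A : Matrix (Fin (m+1)) (Fin (m+1)) ℝ) : Matrix (Fin m) (Fin m) ℝ :=
  Matrix.of fun i j => A i.succ j.succ - A i.succ 0 * A 0 j.succ / A 0 0

lemma det_schur00 {m : ℕ} (A : Matrix (Fin (m+1)) (Fin (m+1)) ℝ) (ha : A 0 0 ≠ 0) :
    A.det = A 0 0 * (schur00 A).det := by
  classical
  set C : Matrix (Fin (m+1)) (Fin (m+1)) ℝ :=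
    Matrix.of (fun i j => if j = 0 ∧ i ≠ 0 then -(A i 0 / A 0 0) else 0) with hC
  set E : Matrix (Fin (m+1)) (Fin (m+1)) ℝ := 1 + C with hE
  have hEdet : E.det = 1 := by
    have htri : E.BlockTriangular (OrderDual.toDual) := by
      intro i j hij
      have hij' : i < j := hij
      have h0 : j ≠ 0 := by
        intro h; subst h; exact absurd hij' (by simp)
      simp [hE, hC, Matrix.one_apply, hij'.ne, h0]
    rw [Matrix.det_of_lowerTriangular E htri]
    have h1 : ∀ i, E i i = 1 := by
      intro i
      simp [hE, hC, Matrix.one_apply]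
    simp [h1]
  set B := E * A with hB
  have hBA : B.det = A.det := by rw [hB, Matrix.det_mul, hEdet, one_mul]
  have hCA : ∀ i j, (C * A) i j = C i 0 * A 0 j := by
    intro i j
    rw [Matrix.mul_apply]
    rw [Finset.sum_eq_single (0 : Fin (m+1))]
    · intro k _ hk
      have : C i k = 0 := by simp [hC, hk]
      rw [this]; ring
    · simp
  have hB0 : ∀ j, B 0 j = A 0 j := by
    intro j
    rw [hB, Matrix.add_mul, Matrix.one_mul, Matrix.add_apply, hCA]
    have : C 0 0 = 0 := by simp [hC]
    rw [this]; ring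
  have hBs : ∀ (i : Fin m) j, B i.succ j = A i.succ j - A i.succ 0 / A 0 0 * A 0 j := by
    intro i j
    rw [hB, Matrix.add_mul, Matrix.one_mul, Matrix.add_apply, hCA]
    have : C i.succ 0 = -(A i.succ 0 / A 0 0) := by simp [hC, Fin.succ_ne_zero]
    rw [this]; ring
  have hcol : ∀ i : Fin m, B i.succ 0 = 0 := by
    intro i; rw [hBs]; field_simp; ring
  rw [← hBA, Matrix.det_succ_column_zero]
  rw [Fin.sum_univ_succ]
  have hz : ∀ i : Fin m, ((-1:ℝ) ^ ((i.succ : Fin (m+1)) : ℕ) * B i.succ 0 *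
      (B.submatrix i.succ.succAbove Fin.succ).det) = 0 := by
    intro i; rw [hcol]; ring
  rw [Finset.sum_congr rfl (fun i _ => hz i), Finset.sum_const_zero, add_zero]
  simp only [Fin.val_zero, pow_zero, one_mul, Fin.succAbove_zero, hB0]
  have hsub : B.submatrix Fin.succ Fin.succ = schur00 A := by
    ext i j
    simp only [Matrix.submatrix_apply, schur00, Matrix.of_apply, hBs]
    ring
  rw [hsub]

lemma diag_pos_of_minors {n : ℕ} (M : Matrix (Fin n) (Fin n) ℝ)
    (hP : PrincipalMinorsPos M) (i : Fin n) : 0 < M i i := by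
  classical
  have h := hP {i}
  haveI : Unique {x // x ∈ ({i} : Finset (Fin n))} :=
    ⟨⟨⟨i, Finset.mem_singleton_self i⟩⟩, fun a => Subtype.ext (Finset.mem_singleton.mp a.2)⟩
  rw [Matrix.det_unique] at h
  have hd : ((default : {x // x ∈ ({i} : Finset (Fin n))}) : Fin n) = i := Finset.mem_singleton.mp (Subtype.property _)
  rw [Matrix.submatrix_apply, hd] at h
  exact h

lemma schur00_minors {N : ℕ} (M : Matrix (Fin (N+1)) (Fin (N+1)) ℝ)
    (hP : PrincipalMinorsPos M) : PrincipalMinorsPos (schur00 M) := by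
  classical
  have ha : 0 < M 0 0 := diag_pos_of_minors M hP 0
  intro s
  -- enumerate s
  obtain ⟨e⟩ : Nonempty (Fin s.card ≃ {x // x ∈ s}) :=
    ⟨(Finset.equivFin s).symm⟩
  set k := s.card
  set σ : Fin k → Fin N := fun i => (e i).1 with hσ
  have hσs : ∀ i, σ i ∈ s := fun i => (e i).2
  have hσinj : Function.Injective σ := fun i j h => e.injective (Subtype.ext h)
  -- the big index set
  set t : Finset (Fin (N+1)) := insert 0 (s.map ⟨Fin.succ, Fin.succ_injective N⟩) with ht
  have h0t : (0 : Fin (N+1)) ∈ t := Finset.mem_insert_self _ _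
  have hsucc_t : ∀ i : Fin k, (σ i).succ ∈ t := by
    intro i
    exact Finset.mem_insert_of_mem (Finset.mem_map_of_mem _ (hσs i))
  have htcard : t.card = k + 1 := by
    rw [ht, Finset.card_insert_of_notMem, Finset.card_map]
    intro h
    simp only [Finset.mem_map] at h
    obtain ⟨y, -, hy⟩ := h
    exact Fin.succ_ne_zero y hy
  -- the enumeration of t
  set F : Fin (k+1) → {x // x ∈ t} :=
    fun i => Fin.cases ⟨0, h0t⟩ (fun i' => ⟨(σ i').succ, hsucc_t i'⟩) i with hF
  have hFinj : Function.Injective F := by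
    intro i j h
    induction i using Fin.cases <;> induction j using Fin.cases <;>
      simp only [hF, Fin.cases_zero, Fin.cases_succ] at h
    · rfl
    · exact absurd (congrArg Subtype.val h) (Ne.symm (Fin.succ_ne_zero _))
    · exact absurd (congrArg Subtype.val h) (Fin.succ_ne_zero _)
    · have := Fin.succ_injective _ (congrArg Subtype.val h)
      rw [hσinj this]
  have hFbij : Function.Bijective F := by
    rw [Fintype.bijective_iff_injective_and_card]
    refine ⟨hFinj, ?_⟩
    simp [htcard]
  set Φ : Fin (k+1) ≃ {x // x ∈ t} := Equiv.ofBijective F hFbij with hΦ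
  -- A := M restricted along F
  set A : Matrix (Fin (k+1)) (Fin (k+1)) ℝ :=
    M.submatrix (fun i => (F i).1) (fun i => (F i).1) with hA
  have hAdet : A.det =
      (M.submatrix (fun i : {i // i ∈ t} => i.1) (fun i : {i // i ∈ t} => i.1)).det := by
    have : A = (M.submatrix (fun i : {i // i ∈ t} => i.1)
        (fun i : {i // i ∈ t} => i.1)).submatrix Φ Φ := by
      ext i j; simp [hA, hΦ, Matrix.submatrix_apply, Equiv.ofBijective_apply]
    rw [this, Matrix.det_submatrix_equiv_self]
  have hA00 : A 0 0 = M 0 0 := by simp [hA, hF]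
  have hAschur : schur00 A = (schur00 M).submatrix σ σ := by
    ext i j
    simp [schur00, hA, hF, Matrix.submatrix_apply]
  -- the small determinant along σ
  have hSdet : ((schur00 M).submatrix σ σ).det =
      ((schur00 M).submatrix (fun i : {i // i ∈ s} => i.1)
        (fun i : {i // i ∈ s} => i.1)).det := by
    have : (schur00 M).submatrix σ σ = ((schur00 M).submatrix
        (fun i : {i // i ∈ s} => i.1) (fun i : {i // i ∈ s} => i.1)).submatrix e e := by
      ext i j; simp [hσ, Matrix.submatrix_apply]
    rw [this, Matrix.det_submatrix_equiv_self]
  have hds := det_schur00 A (by rw [hA00]; exact ha.ne')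
  have hAdetpos : 0 < A.det := by rw [hAdet]; exact hP t
  rw [hds, hA00, hAschur, hSdet] at hAdetpos
  rcases mul_pos_iff.mp hAdetpos with ⟨-, h2⟩ | ⟨h1, -⟩
  · exact h2
  · linarith

lemma mmatrix_semipositive : ∀ (n : ℕ) (M : Matrix (Fin n) (Fin n) ℝ),
    IsNonsingularMMatrix M →
    ∃ lam : Fin n → ℝ, (∀ i, 0 < lam i) ∧ ∀ i, 0 < M.mulVec lam i := by
  intro n
  induction n with
  | zero => exact fun M _ => ⟨0, fun i => i.elim0, fun i => i.elim0⟩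
  | succ N ih =>
    intro M hM
    obtain ⟨hoff, hP⟩ := hM
    have ha : 0 < M 0 0 := diag_pos_of_minors M hP 0
    set S := schur00 M with hS
    have hSM : IsNonsingularMMatrix S := by
      constructor
      · intro i j hij
        have h1 : M i.succ j.succ ≤ 0 :=
          hoff _ _ (fun h => hij (Fin.succ_injective _ h))
        have h2 : M i.succ 0 ≤ 0 := hoff _ _ (Fin.succ_ne_zero i)
        have h3 : M 0 j.succ ≤ 0 := hoff _ _ (Ne.symm (Fin.succ_ne_zero j))
        have : 0 ≤ M i.succ 0 * M 0 j.succ / M 0 0 :=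
          div_nonneg (by nlinarith) ha.le
        simp only [hS, schur00, Matrix.of_apply]
        linarith
      · exact schur00_minors M hP
    obtain ⟨y, hy, hSy⟩ := ih S hSM
    -- key quantities
    set P : ℝ := ∑ j, M 0 j.succ * y j with hPdef
    have hPle : P ≤ 0 := Finset.sum_nonpos fun j _ =>
      mul_nonpos_of_nonpos_of_nonneg (hoff _ _ (Ne.symm (Fin.succ_ne_zero j))) (hy j).le
    set t₀ : ℝ := -P / M 0 0 with ht₀
    have ht₀nn : 0 ≤ t₀ := div_nonneg (by linarith) ha.le
    obtain ⟨δ, hδ, hδle⟩ := exists_pos_forall_le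
      (fun i : Fin N => S.mulVec y i / (1 + |M i.succ 0|))
      (fun i => div_pos (hSy i) (by positivity))
    set lam : Fin (N+1) → ℝ := fun i => Fin.cases (t₀ + δ) y i with hlam
    have hlam0 : lam 0 = t₀ + δ := rfl
    have hlams : ∀ j : Fin N, lam j.succ = y j := fun j => rfl
    refine ⟨lam, ?_, ?_⟩
    · intro i
      induction i using Fin.cases with
      | zero => rw [hlam0]; linarith
      | succ j => rw [hlams]; exact hy j
    · intro i
      have hmv : ∀ i : Fin (N+1),
          M.mulVec lam i = M i 0 * (t₀ + δ) + ∑ j, M i j.succ * y j := by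
        intro i
        rw [Matrix.mulVec, dotProduct, Fin.sum_univ_succ, hlam0]
        congr 1
      induction i using Fin.cases with
      | zero =>
        rw [hmv, ← hPdef, ht₀]
        have : M 0 0 * (-P / M 0 0 + δ) + P = M 0 0 * δ := by
          field_simp
          ring
        rw [this]
        positivity
      | succ i =>
        rw [hmv]
        have hSyi : S.mulVec y i = (∑ j, M i.succ j.succ * y j) + M i.succ 0 * t₀ := by
          rw [Matrix.mulVec, dotProduct]
          have : ∀ j : Fin N, S i j * y j
              = M i.succ j.succ * y j - M i.succ 0 * (M 0 j.succ * y j) / M 0 0 := by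
            intro j; simp only [hS, schur00, Matrix.of_apply]; ring
          rw [Finset.sum_congr rfl fun j _ => this j, Finset.sum_sub_distrib]
          have : ∑ j, M i.succ 0 * (M 0 j.succ * y j) / M 0 0
              = M i.succ 0 / M 0 0 * P := by
            rw [hPdef, Finset.mul_sum]
            exact Finset.sum_congr rfl fun j _ => by ring
          rw [this, ht₀]
          ring
        -- target: 0 < M i.succ 0 * (t₀ + δ) + ∑ j, M i.succ j.succ * y j
        --        = S.mulVec y i + M i.succ 0 * δ
        have key : M i.succ 0 * (t₀ + δ) + ∑ j, M i.succ j.succ * y j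
            = S.mulVec y i + M i.succ 0 * δ := by rw [hSyi]; ring
        rw [key]
        have h4 : δ * (1 + |M i.succ 0|) ≤ S.mulVec y i := by
          have := hδle i
          rw [le_div_iff₀ (by positivity)] at this
          linarith
        have h5 : -(|M i.succ 0| * δ) ≤ M i.succ 0 * δ := by
          nlinarith [neg_abs_le (M i.succ 0), hδ.le]
        nlinarith [abs_nonneg (M i.succ 0)]

lemma no_upcross {f : ℝ → ℝ} {t₀ D : ℝ} (hf : HasDerivAt f D t₀) (hD : D < 0)
    (hlt : ∀ t < t₀, f t < f t₀) : False := by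
  have h := hasDerivAt_iff_tendsto_slope.mp hf
  have h2 : ∀ᶠ t in 𝓝[≠] t₀, slope f t₀ t < 0 := h.eventually_lt_const hD
  have h3 : ∀ᶠ t in 𝓝[<] t₀, slope f t₀ t < 0 :=
    h2.filter_mono (nhdsWithin_mono t₀ (fun t ht => ne_of_lt ht))
  obtain ⟨t, hslope, htmem⟩ := (h3.and self_mem_nhdsWithin).exists
  rw [slope_def_field] at hslope
  have hden : t - t₀ < 0 := sub_neg.mpr htmem
  rcases div_neg_iff.mp hslope with ⟨h4, -⟩ | ⟨-, h5⟩
  · have := hlt t htmem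
    linarith
  · linarith

lemma first_crossing {n : ℕ} (f : ℝ → Fin n → ℝ) (hf : ∀ i, Continuous fun t => f t i)
    (L : Fin n → ℝ) (h0 : ∀ t ≤ (0:ℝ), ∀ i, f t i < L i)
    (hnot : ¬ ∀ t, 0 ≤ t → ∀ i, f t i < L i) :
    ∃ t₀ i, 0 < t₀ ∧ f t₀ i = L i ∧ ∀ t < t₀, ∀ j, f t j < L j := by
  push_neg at hnot
  obtain ⟨t₁, ht₁, i₁, hi₁⟩ := hnot
  set T : Set ℝ := {t | 0 ≤ t ∧ ∃ i, L i ≤ f t i} with hT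
  have hTne : T.Nonempty := ⟨t₁, ht₁, i₁, hi₁⟩
  have hTbdd : BddBelow T := ⟨0, fun s hs => hs.1⟩
  have hTclosed : IsClosed T := by
    have : T = Set.Ici 0 ∩ ⋃ i, {t | L i ≤ f t i} := by
      ext t; simp [hT, Set.mem_iUnion, Set.mem_Ici]
    rw [this]
    exact isClosed_Ici.inter
      (isClosed_iUnion_of_finite fun i => isClosed_le continuous_const (hf i))
  set t₀ := sInf T with ht₀def
  have ht₀T : t₀ ∈ T := hTclosed.csInf_mem hTne hTbdd
  obtain ⟨ht₀0, i, hi⟩ := ht₀T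
  have hlt_pre : ∀ t < t₀, ∀ j, f t j < L j := by
    intro t ht j
    rcases le_or_gt t 0 with h | h
    · exact h0 t h j
    · have hnT : t ∉ T := fun hmem => absurd (csInf_le hTbdd hmem) (not_le.mpr ht)
      by_contra hcon
      exact hnT ⟨h.le, j, not_lt.mp hcon⟩
  have ht₀pos : 0 < t₀ := by
    rcases lt_or_eq_of_le ht₀0 with h | h
    · exact h
    · exfalso
      have h1 := h0 0 le_rfl i
      rw [h] at h1
      exact absurd hi (not_le.mpr h1)
  refine ⟨t₀, i, ht₀pos, ?_, hlt_pre⟩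
  have htd : Filter.Tendsto (fun s => f s i) (𝓝[<] t₀) (𝓝 (f t₀ i)) :=
    ((hf i).tendsto t₀).mono_left nhdsWithin_le_nhds
  have hle : f t₀ i ≤ L i :=
    le_of_tendsto htd (eventually_nhdsWithin_of_forall fun s hs => (hlt_pre s hs i).le)
  exact le_antisymm hle hi


/-- Lemma 3.1: if `M̂₀ = N - |A|` is a nonsingular M-matrix, then every admissible
solution of the controlled Lotka-Volterra system is bounded on `[0,∞)`. -/
theorem bounded_of_nonsingularMMatrix
    {n : ℕ} (hn : 1 ≤ n) (μ c d e b : Fin n → ℝ) (a : Matrix (Fin n) (Fin n) ℝ)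
    (hμ : ∀ i, 0 < μ i) (hc : ∀ i, 0 < c i) (hd : ∀ i, 0 < d i) (he : ∀ i, 0 < e i)
    (K : Fin n → Fin n → ℝ → ℝ) (G : Fin n → ℝ → ℝ)
    (hK : ∀ i j, KernelOK (K i j)) (hG : ∀ i, KernelOK (G i))
    (hM0 : IsNonsingularMMatrix (Matrix.diagonal μ - Matrix.of fun i j => |a i j|))
    (x u : ℝ → Fin n → ℝ) (hadm : AdmissibleSolution b μ c d e a K G x u) :
    ∃ B : ℝ, ∀ t, 0 ≤ t → ∀ i, |x t i| ≤ B ∧ |u t i| ≤ B := by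
  obtain ⟨hxc, huc, hxnn, hunn, ⟨B₀, hB₀⟩, hx0, hu0, hxode, huode⟩ := hadm
  obtain ⟨lam, hlam, hMlam⟩ := mmatrix_semipositive n _ hM0
  set m : Fin n → ℝ :=
    fun i => (Matrix.diagonal μ - Matrix.of fun i j => |a i j|).mulVec lam i with hm
  have hmi : ∀ i, m i = μ i * lam i - ∑ j, |a i j| * lam j := by
    intro i
    rw [hm]
    show (Matrix.diagonal μ - Matrix.of fun i j => |a i j|).mulVec lam i = _
    rw [Matrix.sub_mulVec, Pi.sub_apply, Matrix.mulVec_diagonal]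
    congr 1
  obtain ⟨V, hV0, hVlt⟩ := exists_pos_forall_lt
    (fun i => max (B₀ / lam i) (b i / m i))
  have hB₀V : ∀ i, B₀ < lam i * V := by
    intro i
    have h1 : B₀ / lam i < V := lt_of_le_of_lt (le_max_left _ _) (hVlt i)
    rw [div_lt_iff₀ (hlam i)] at h1
    linarith
  have hbV : ∀ i, b i < m i * V := by
    intro i
    have h1 : b i / m i < V := lt_of_le_of_lt (le_max_right _ _) (hVlt i)
    rw [div_lt_iff₀ (hMlam i)] at h1
    linarith
  -- x is bounded by lam i * V
  have hx0V : ∀ t ≤ (0:ℝ), ∀ i, x t i < lam i * V :=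
    fun t ht i => lt_of_le_of_lt (hB₀ t ht i).1 (hB₀V i)
  have hxbound : ∀ t, 0 ≤ t → ∀ i, x t i < lam i * V := by
    by_contra hnot
    obtain ⟨t₀, i, ht₀pos, hxt₀, hpre⟩ :=
      first_crossing x hxc (fun i => lam i * V) hx0V hnot
    -- estimate the integrals
    have hIbound : ∀ j, 0 ≤ (∫ s in Set.Ioi (0:ℝ), K i j s * x (t₀ - s) j) ∧
        (∫ s in Set.Ioi (0:ℝ), K i j s * x (t₀ - s) j) ≤ lam j * V := by
      intro j
      obtain ⟨hKnn, hKint, hKone⟩ := hK i j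
      have hxle : ∀ s ∈ Set.Ioi (0:ℝ), x (t₀ - s) j ≤ lam j * V :=
        fun s hs => (hpre (t₀ - s) (by simp [Set.mem_Ioi] at hs; linarith) j).le
      have hmeas : AEStronglyMeasurable (fun s => K i j s * x (t₀ - s) j)
          (volume.restrict (Set.Ioi 0)) :=
        hKint.aestronglyMeasurable.mul
          (((hxc j).comp (continuous_const.sub continuous_id)).aestronglyMeasurable.restrict)
      have hgint : IntegrableOn (fun s => lam j * V * K i j s) (Set.Ioi 0) :=
        hKint.const_mul _
      have hint : IntegrableOn (fun s => K i j s * x (t₀ - s) j) (Set.Ioi 0) := by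
        refine Integrable.mono' hgint hmeas ?_
        rw [ae_restrict_iff' measurableSet_Ioi]
        filter_upwards with s hs
        have h1 : 0 ≤ K i j s := hKnn s (le_of_lt hs)
        have h2 : 0 ≤ x (t₀ - s) j := hxnn _ j
        rw [Real.norm_eq_abs, abs_of_nonneg (mul_nonneg h1 h2)]
        calc K i j s * x (t₀ - s) j ≤ K i j s * (lam j * V) :=
              mul_le_mul_of_nonneg_left (hxle s hs) h1
          _ = lam j * V * K i j s := by ring
      constructor
      · exact setIntegral_nonneg measurableSet_Ioi
          (fun s hs => mul_nonneg (hKnn s (le_of_lt hs)) (hxnn _ j))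
      · calc (∫ s in Set.Ioi (0:ℝ), K i j s * x (t₀ - s) j)
            ≤ ∫ s in Set.Ioi (0:ℝ), lam j * V * K i j s := by
              refine setIntegral_mono_on hint hgint measurableSet_Ioi ?_
              intro s hs
              calc K i j s * x (t₀ - s) j
                  ≤ K i j s * (lam j * V) :=
                    mul_le_mul_of_nonneg_left (hxle s hs) (hKnn s (le_of_lt hs))
                _ = lam j * V * K i j s := by ring
          _ = lam j * V * ∫ s in Set.Ioi (0:ℝ), K i j s := by
              exact integral_const_mul _ _
          _ = lam j * V := by rw [hKone, mul_one]
    have hJ : 0 ≤ ∫ s in Set.Ioi (0:ℝ), G i s * u (t₀ - s) i :=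
      setIntegral_nonneg measurableSet_Ioi
        (fun s hs => mul_nonneg ((hG i).1 s (le_of_lt hs)) (hunn _ i))
    -- the derivative is negative
    set D := x t₀ i * (b i - μ i * x t₀ i
        - (∑ j, a i j * ∫ s in Set.Ioi (0:ℝ), K i j s * x (t₀ - s) j)
        - c i * ∫ s in Set.Ioi (0:ℝ), G i s * u (t₀ - s) i) with hD
    have hsum : -(∑ j, |a i j| * (lam j * V))
        ≤ ∑ j, a i j * ∫ s in Set.Ioi (0:ℝ), K i j s * x (t₀ - s) j := by
      rw [← Finset.sum_neg_distrib]
      refine Finset.sum_le_sum fun j _ => ?_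
      obtain ⟨h1, h2⟩ := hIbound j
      have h3 : |a i j * ∫ s in Set.Ioi (0:ℝ), K i j s * x (t₀ - s) j|
          ≤ |a i j| * (lam j * V) := by
        rw [abs_mul]
        exact mul_le_mul_of_nonneg_left (by rwa [abs_of_nonneg h1]) (abs_nonneg _)
      linarith [neg_abs_le (a i j * ∫ s in Set.Ioi (0:ℝ), K i j s * x (t₀ - s) j)]
    have hDneg : D < 0 := by
      rw [hD, hxt₀]
      apply mul_neg_of_pos_of_neg (mul_pos (hlam i) hV0)
      have hsum2 : (∑ j, |a i j| * (lam j * V)) = (∑ j, |a i j| * lam j) * V := by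
        rw [Finset.sum_mul]
        exact Finset.sum_congr rfl fun j _ => by ring
      have hbi := hbV i
      rw [hmi i] at hbi
      have hci : 0 ≤ c i * ∫ s in Set.Ioi (0:ℝ), G i s * u (t₀ - s) i :=
        mul_nonneg (hc i).le hJ
      nlinarith [hsum, hsum2]
    exact no_upcross (hxode i t₀ ht₀pos) hDneg
      (fun t ht => by rw [hxt₀]; exact hpre t ht i)
  -- u is bounded
  obtain ⟨W, hW0, hWlt⟩ := exists_pos_forall_lt
    (fun i => max B₀ (d i * (lam i * V) / e i))
  have hu0W : ∀ t ≤ (0:ℝ), ∀ i, u t i < W :=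
    fun t ht i => lt_of_le_of_lt (hB₀ t ht i).2
      (lt_of_le_of_lt (le_max_left _ _) (hWlt i))
  have hubound : ∀ t, 0 ≤ t → ∀ i, u t i < W := by
    by_contra hnot
    obtain ⟨t₀, i, ht₀pos, hut₀, hpre⟩ :=
      first_crossing u huc (fun _ => W) hu0W hnot
    have hxW : x t₀ i < lam i * V := hxbound t₀ ht₀pos.le i
    have hdW : d i * (lam i * V) < e i * W := by
      have h1 : d i * (lam i * V) / e i < W :=
        lt_of_le_of_lt (le_max_right _ _) (hWlt i)
      rw [div_lt_iff₀ (he i)] at h1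
      linarith
    have hDneg : -(e i) * u t₀ i + d i * x t₀ i < 0 := by
      rw [hut₀]
      have : d i * x t₀ i ≤ d i * (lam i * V) :=
        mul_le_mul_of_nonneg_left hxW.le (hd i).le
      linarith
    exact no_upcross (huode i t₀ ht₀pos) hDneg
      (fun t ht => by rw [hut₀]; exact hpre t ht i)
  -- conclude
  obtain ⟨B₁, hB₁0, hB₁⟩ := exists_pos_forall_lt (fun i => lam i * V)
  refine ⟨max B₁ W, fun t ht i => ⟨?_, ?_⟩⟩
  · rw [abs_of_nonneg (hxnn t i)]
    exact le_trans (le_of_lt (lt_of_lt_of_le (hxbound t ht i) (le_of_lt (hB₁ i)))) (le_max_left _ _)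
  · rw [abs_of_nonneg (hunn t i)]
    exact le_trans (le_of_lt (hubound t ht i)) (le_max_right _ _)
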